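/- Merging adjacent violating pieces preserves L2 isotonic optimality structure: if two adjacent blocks [i,j] and [j+1,k] have weighted means μ₁ ≥ μ₂ respectively, then in any L2 isotonic regression restricted to being constant on each of these two blocks, the optimal isotonic choice assigns both blocks the common value equal to the weighted mean of [i,k], with squared error err(i,k). -/

import Mathlib

/-- Weighted mean of `y` with weights `w` on the interval `[i, j]`. -/
noncomputable def wmean (w y : ℕ → ℝ) (i j : ℕ) : ℝ :=
  (∑ k ∈ Finset.Icc i j, w k * y k) / (∑ k ∈ Finset.Icc i j, w k)

/-- Pooling adjacent violators: if the mean of `[i, j]` is at least the mean of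
`[j+1, k]`, then among isotonic assignments of constants to the two blocks, the
optimum assigns both blocks the weighted mean of `[i, k]`, with total squared
error `err(i, k)`. -/
theorem pav_merge_optimal (w y : ℕ → ℝ) (hw : ∀ l, 0 < w l)
    (i j k : ℕ) (hij : i ≤ j) (hjk : j < k)
    (hviol : wmean w y (j + 1) k ≤ wmean w y i j) :
    IsLeast
      {e : ℝ | ∃ C₁ C₂ : ℝ, C₁ ≤ C₂ ∧
        e = ∑ l ∈ Finset.Icc i j, w l * (y l - C₁) ^ 2 +
            ∑ l ∈ Finset.Icc (j + 1) k, w l * (y l - C₂) ^ 2}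
      (∑ l ∈ Finset.Icc i k, w l * (y l - wmean w y i k) ^ 2) := by
  have hsplit : ∀ f : ℕ → ℝ, ∑ l ∈ Finset.Icc i k, f l =
      ∑ l ∈ Finset.Icc i j, f l + ∑ l ∈ Finset.Icc (j+1) k, f l := by
    intro f
    rw [← Finset.sum_union]
    · congr 1
      ext x
      simp only [Finset.mem_union, Finset.mem_Icc]
      omega
    · simp only [Finset.disjoint_left, Finset.mem_Icc]
      omega
  set A₁ := ∑ l ∈ Finset.Icc i j, w l * y l ^ 2 with hA₁
  set B₁ := ∑ l ∈ Finset.Icc i j, w l * y l with hB₁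
  set W₁ := ∑ l ∈ Finset.Icc i j, w l with hW₁
  set A₂ := ∑ l ∈ Finset.Icc (j+1) k, w l * y l ^ 2 with hA₂
  set B₂ := ∑ l ∈ Finset.Icc (j+1) k, w l * y l with hB₂
  set W₂ := ∑ l ∈ Finset.Icc (j+1) k, w l with hW₂
  have hW₁pos : 0 < W₁ := Finset.sum_pos (fun l _ => hw l) ⟨i, by simp [Finset.mem_Icc, hij]⟩
  have hW₂pos : 0 < W₂ := Finset.sum_pos (fun l _ => hw l) ⟨j+1, by simp [Finset.mem_Icc]; omega⟩
  have expand : ∀ (s : Finset ℕ) (C : ℝ), ∑ l ∈ s, w l * (y l - C) ^ 2 =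
      (∑ l ∈ s, w l * y l ^ 2) - 2 * C * (∑ l ∈ s, w l * y l) + C ^ 2 * (∑ l ∈ s, w l) := by
    intro s C
    rw [Finset.mul_sum, Finset.mul_sum, ← Finset.sum_sub_distrib, ← Finset.sum_add_distrib]
    exact Finset.sum_congr rfl fun x _ => by ring
  have hμ : wmean w y i k = (B₁ + B₂) / (W₁ + W₂) := by
    rw [wmean, hsplit (fun l => w l * y l), hsplit w]
  have hviol' : B₂ * W₁ ≤ B₁ * W₂ := by
    rw [wmean, wmean, div_le_div_iff₀ hW₂pos hW₁pos] at hviol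
    linarith
  constructor
  · refine ⟨wmean w y i k, wmean w y i k, le_refl _, ?_⟩
    rw [hsplit (fun l => w l * (y l - wmean w y i k) ^ 2)]
  · rintro e ⟨C₁, C₂, hC, rfl⟩
    rw [expand, expand, expand, hsplit (fun l => w l * y l ^ 2),
      hsplit (fun l => w l * y l), hsplit w, hμ, ← hA₁, ← hB₁, ← hW₁, ← hA₂, ← hB₂, ← hW₂]
    set W := W₁ + W₂ with hW
    have hWpos : 0 < W := by positivity
    set μ := (B₁ + B₂) / W with hμdef
    have hB : B₁ + B₂ = μ * W := by
      rw [hμdef, div_mul_cancel₀ _ hWpos.ne']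
    have hprod : (B₁ - μ * W₁) * W = B₁ * W₂ - B₂ * W₁ := by
      linear_combination W₁ * hB
    have ha : 0 ≤ B₁ - μ * W₁ := by nlinarith [hprod, hviol', hWpos]
    have hkey : -2*(B₁-μ*W₁)*(C₁-μ) - 2*(B₂-μ*W₂)*(C₂-μ) = 2*(B₁-μ*W₁)*(C₂-C₁) := by
      linear_combination (-2*(C₂-μ)) * hB
    nlinarith [mul_nonneg hW₁pos.le (sq_nonneg (C₁ - μ)), mul_nonneg hW₂pos.le (sq_nonneg (C₂ - μ)),
      mul_nonneg ha (sub_nonneg.2 hC), hkey]
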